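/- Fix C₁, C₂ ∈ ℝ with C₂ ≠ 0 and smooth μ₂ > 0 with derivative μ₂' on an interval. Define μ₁ = −(3/2)μ₂² + C₁ and μ₃ = C₂/μ₂². Then the 6×6 matrix Θ with rows [0, 1, −μ₁−μ₂², μ₂', μ₂μ₃, 0], [0, 0, 0, −μ₂, 0, 1], [1, 0, 0, 0, 0, −μ₁−μ₂²], [0, μ₂, 0, 0, 0, μ₂'], [0, 0, 0, 0, 0, μ₂μ₃], [0, 0, 1, 0, 0, 0] has characteristic polynomial χ_Θ(t) = t⁶ + 2C₁ t⁴ − (1 + C₃) t² − C₂², where C₃ = (μ₂')² + μ₂⁴ − 2C₁μ₂² + C₂²/μ₂² (assumed constant). -/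

import Mathlib

open Polynomial

@[simp] lemma cons_val_five' {α : Type*} {m : ℕ} (x : α)
    (u : Fin m.succ.succ.succ.succ.succ → α) :
    Matrix.vecCons x u 5 =
      Matrix.vecHead (Matrix.vecTail (Matrix.vecTail (Matrix.vecTail (Matrix.vecTail u)))) :=
  rfl

set_option maxHeartbeats 3200000 in
set_option maxRecDepth 8000 in
/-- At a fixed parameter value, with `μ₂ = m > 0`, `μ₂' = m'`, `μ₁ = −(3/2)m² + C₁`,
`μ₃ = C₂/m²` and energy constant `C₃ = m'² + m⁴ − 2C₁m² + C₂²/m²`, the `6×6` matrix `Θ`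
has characteristic polynomial `t⁶ + 2C₁t⁴ − (1 + C₃)t² − C₂²`. -/
theorem stmt_16 (C₁ C₂ : ℝ) (hC₂ : C₂ ≠ 0) (m m' : ℝ) (hm : 0 < m)
    (μ₁ μ₃ C₃ : ℝ)
    (hμ₁ : μ₁ = -(3 / 2) * m ^ 2 + C₁)
    (hμ₃ : μ₃ = C₂ / m ^ 2)
    (hC₃ : C₃ = m' ^ 2 + m ^ 4 - 2 * C₁ * m ^ 2 + C₂ ^ 2 / m ^ 2)
    (Θ : Matrix (Fin 6) (Fin 6) ℝ)
    (hΘ : Θ = !![0, 1, -μ₁ - m ^ 2, m', m * μ₃, 0;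
                 0, 0, 0, -m, 0, 1;
                 1, 0, 0, 0, 0, -μ₁ - m ^ 2;
                 0, m, 0, 0, 0, m';
                 0, 0, 0, 0, 0, m * μ₃;
                 0, 0, 1, 0, 0, 0]) :
    Θ.charpoly = X ^ 6 + C (2 * C₁) * X ^ 4 - C (1 + C₃) * X ^ 2 - C (C₂ ^ 2) := by
  have hm0 : (m : ℝ) ≠ 0 := ne_of_gt hm
  have h4 : (2 * C₁ : ℝ) = m ^ 2 - 2 * (-μ₁ - m ^ 2) := by rw [hμ₁]; ring
  have h2 : (1 + C₃ : ℝ) = 1 + m' ^ 2 + (m * μ₃) ^ 2 + 2 * (-μ₁ - m ^ 2) * m ^ 2 := by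
    rw [hC₃, hμ₁, hμ₃]; field_simp; ring
  have h0 : (C₂ ^ 2 : ℝ) = (m * μ₃) ^ 2 * m ^ 2 := by rw [hμ₃]; field_simp
  have hM : Matrix.charmatrix Θ =
      !![X, -C 1, -C (-μ₁ - m ^ 2), -C m', -C (m * μ₃), 0;
         0, X, 0, -C (-m), 0, -C 1;
         -C 1, 0, X, 0, 0, -C (-μ₁ - m ^ 2);
         0, -C m, 0, X, 0, -C m';
         0, 0, 0, 0, X, -C (m * μ₃);
         0, 0, -C 1, 0, 0, X] := by
    subst hΘ
    apply Matrix.ext; intro i j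
    fin_cases i <;> fin_cases j <;>
      simp [Matrix.charmatrix_apply, Matrix.one_apply, Matrix.vecHead, Matrix.vecTail]
  rw [Matrix.charpoly, hM, h4, h2, h0]
  simp (config := { decide := true }) [Matrix.det_succ_row_zero, Fin.sum_univ_succ, Fin.succAbove, Fin.castSucc, Fin.castAdd, Fin.castLE, map_ofNat, show ((3 : Fin 4) : ℕ) = 3 from rfl, show ((3 : Fin 5) : ℕ) = 3 from rfl, Fin.eta, show (⟨3, by norm_num⟩ : Fin 6) = 3 from rfl]
  ring
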